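/- Let G be a finite group, N a normal subgroup with G/N cyclic, and σ an irreducible complex representation of N whose G-conjugacy stabilizer is all of G (i.e., σ^g ≅ σ for all g ∈ G). Then σ extends to a representation of G, i.e., there exists a representation σ̃ of G with σ̃|_N ≅ σ. -/

import Mathlib

theorem stmt_13 (G : Type*) [Group G] [Finite G] (N : Subgroup G) (hN : N.Normal)
    [IsCyclic (G ⧸ N)]
    (V : Type*) [AddCommGroup V] [Module ℂ V] [FiniteDimensional ℂ V]
    (σ : Representation ℂ N V)
    -- σ is irreducible
    (hirr : Nontrivial V ∧ ∀ W : Submodule ℂ V, (∀ (n : N) (v : V), v ∈ W → σ n v ∈ W) →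
      W = ⊥ ∨ W = ⊤)
    -- the stabilizer of σ under G-conjugation is all of G: σ^g ≅ σ for all g ∈ G
    (hstab : ∀ g : G, ∃ e : V ≃ₗ[ℂ] V, ∀ (n : N) (v : V),
      e (σ (⟨g⁻¹ * (n : G) * g, by simpa using hN.conj_mem _ n.2 g⁻¹⟩ : N) v) = σ n (e v)) :
    ∃ σt : Representation ℂ G V, ∀ n : N, σt (n : G) = σ n := by
  classical
  obtain ⟨hnt, hsimple⟩ := hirr
  haveI := hnt
  obtain ⟨x, hx⟩ := IsCyclic.exists_generator (α := G ⧸ N)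
  obtain ⟨g₀, rfl⟩ := QuotientGroup.mk_surjective x
  set m : ℕ := orderOf ((g₀ : G ⧸ N)) with hm
  have hmpos : 0 < m := orderOf_pos _
  have hmem : ∀ t : ℤ, g₀ ^ t ∈ N ↔ (m : ℤ) ∣ t := by
    intro t
    rw [← QuotientGroup.eq_one_iff, QuotientGroup.mk_zpow, ← orderOf_dvd_iff_zpow_eq_one]
  have key : ∀ g : G, ∃ k : ℤ, (g₀ ^ k)⁻¹ * g ∈ N := by
    intro g
    obtain ⟨k, hk⟩ := hx ((g : G ⧸ N))
    refine ⟨k, ?_⟩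
    rw [← QuotientGroup.eq (s := N)]
    exact_mod_cast hk
  have hcmem : (g₀ : G) ^ (m : ℤ) ∈ N := (hmem m).mpr dvd_rfl
  set c : N := ⟨g₀ ^ (m : ℤ), hcmem⟩ with hc
  set σu : N →* (V →ₗ[ℂ] V)ˣ := σ.asGroupHom with hσu
  have hσuval : ∀ y : N, (σu y : V →ₗ[ℂ] V) = σ y := fun y => σ.asGroupHom_apply y
  obtain ⟨e, he⟩ := hstab g₀
  set Tu : (V →ₗ[ℂ] V)ˣ :=
    ⟨e.toLinearMap, e.symm.toLinearMap,
      by ext v; simp [Module.End.mul_apply],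
      by ext v; simp [Module.End.mul_apply]⟩ with hTu
  -- base intertwining relation
  have hTe : ∀ (y z : N), (z : G) = g₀⁻¹ * ↑y * g₀ →
      (Tu : V →ₗ[ℂ] V) * σ z = σ y * (Tu : V →ₗ[ℂ] V) := by
    intro y z hz
    have hz' : z = ⟨g₀⁻¹ * ↑y * g₀, by simpa using hN.conj_mem _ y.2 g₀⁻¹⟩ := Subtype.ext hz
    subst hz'
    ext v
    simpa [hTu, Module.End.mul_apply] using he y v
  -- iterated intertwining (natural powers of Tu)
  have hTn : ∀ (j : ℕ) (y z : N), (z : G) = (g₀ ^ j)⁻¹ * ↑y * g₀ ^ j →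
      ((Tu ^ j : (V →ₗ[ℂ] V)ˣ) : V →ₗ[ℂ] V) * σ z = σ y * ((Tu ^ j : (V →ₗ[ℂ] V)ˣ) : V →ₗ[ℂ] V) := by
    intro j
    induction j with
    | zero =>
      intro y z hz
      have : z = y := Subtype.ext (by simpa using hz)
      subst this; simp
    | succ j ih =>
      intro y z hz
      have hwmem : (g₀ ^ j)⁻¹ * ↑y * g₀ ^ j ∈ N := by
        simpa using hN.conj_mem _ y.2 ((g₀ : G) ^ j)⁻¹
      set w : N := ⟨(g₀ ^ j)⁻¹ * ↑y * g₀ ^ j, hwmem⟩ with hw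
      have hz' : (z : G) = g₀⁻¹ * ↑w * g₀ := by
        rw [hz, hw]; simp [pow_succ, mul_assoc, mul_inv_rev]
      calc ((Tu ^ (j+1) : (V →ₗ[ℂ] V)ˣ) : V →ₗ[ℂ] V) * σ z
          = ((Tu ^ j : (V →ₗ[ℂ] V)ˣ) : V →ₗ[ℂ] V) * ((Tu : V →ₗ[ℂ] V) * σ z) := by
            rw [pow_succ, Units.val_mul, mul_assoc]
        _ = ((Tu ^ j : (V →ₗ[ℂ] V)ˣ) : V →ₗ[ℂ] V) * (σ w * (Tu : V →ₗ[ℂ] V)) := by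
            rw [hTe w z hz']
        _ = (σ y * ((Tu ^ j : (V →ₗ[ℂ] V)ˣ) : V →ₗ[ℂ] V)) * (Tu : V →ₗ[ℂ] V) := by
            rw [← mul_assoc, ih y w rfl]
        _ = σ y * ((Tu ^ (j+1) : (V →ₗ[ℂ] V)ˣ) : V →ₗ[ℂ] V) := by
            rw [pow_succ, Units.val_mul, mul_assoc]
  -- the Schur operator
  set Su : (V →ₗ[ℂ] V)ˣ := (σu c)⁻¹ * Tu ^ m with hSu
  have hScomm : ∀ y : N, (Su : V →ₗ[ℂ] V) * σ y = σ y * (Su : V →ₗ[ℂ] V) := by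
    intro y
    set z : N := c * y * c⁻¹ with hzdef
    have hyz : (y : G) = (g₀ ^ m)⁻¹ * ↑z * g₀ ^ m := by
      rw [hzdef]
      push_cast [hc]
      rw [zpow_natCast]
      group
    have h1 := hTn m z y hyz
    have h2 : ((σu c)⁻¹ : (V →ₗ[ℂ] V)ˣ).val * σ z = σ y * ((σu c)⁻¹ : (V →ₗ[ℂ] V)ˣ).val := by
      rw [← map_inv σu, hσuval]
      have : σ (c⁻¹) * σ z = σ y * σ (c⁻¹) := by
        rw [← map_mul, ← map_mul]
        congr 1
        rw [hzdef]; group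
      exact this
    calc (Su : V →ₗ[ℂ] V) * σ y
        = ((σu c)⁻¹ : (V →ₗ[ℂ] V)ˣ).val * (((Tu ^ m : (V →ₗ[ℂ] V)ˣ) : V →ₗ[ℂ] V) * σ y) := by
          rw [hSu, Units.val_mul, mul_assoc]
      _ = ((σu c)⁻¹ : (V →ₗ[ℂ] V)ˣ).val * (σ z * ((Tu ^ m : (V →ₗ[ℂ] V)ˣ) : V →ₗ[ℂ] V)) := by rw [h1]
      _ = (σ y * ((σu c)⁻¹ : (V →ₗ[ℂ] V)ˣ).val) * ((Tu ^ m : (V →ₗ[ℂ] V)ˣ) : V →ₗ[ℂ] V) := by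
          rw [← mul_assoc, h2]
      _ = σ y * (Su : V →ₗ[ℂ] V) := by rw [hSu, Units.val_mul, mul_assoc]
  -- Schur's lemma: Su is a scalar
  obtain ⟨μ, hμ⟩ := Module.End.exists_eigenvalue (Su : V →ₗ[ℂ] V)
  have hSscal : ∀ v : V, (Su : V →ₗ[ℂ] V) v = μ • v := by
    have hWinv : ∀ (n : N) (v : V), v ∈ Module.End.eigenspace (Su : V →ₗ[ℂ] V) μ →
        σ n v ∈ Module.End.eigenspace (Su : V →ₗ[ℂ] V) μ := by
      intro n v hv
      rw [Module.End.mem_eigenspace_iff] at hv ⊢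
      have : ((Su : V →ₗ[ℂ] V) * σ n) v = (σ n * (Su : V →ₗ[ℂ] V)) v := by rw [hScomm n]
      simpa [Module.End.mul_apply, hv, map_smul] using this
    rcases hsimple _ hWinv with h | h
    · exact absurd h hμ
    · intro v
      have : v ∈ Module.End.eigenspace (Su : V →ₗ[ℂ] V) μ := h ▸ Submodule.mem_top
      exact Module.End.mem_eigenspace_iff.mp this
  have hμ0 : μ ≠ 0 := by
    intro h0
    obtain ⟨v, hv⟩ := exists_ne (0 : V)
    apply hv
    have h1 : (Su : V →ₗ[ℂ] V) v = 0 := by rw [hSscal v, h0, zero_smul]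
    have h2 : (Su⁻¹ : (V →ₗ[ℂ] V)ˣ).val ((Su : V →ₗ[ℂ] V) v) = v := by
      rw [← Module.End.mul_apply, ← Units.val_mul, inv_mul_cancel, Units.val_one,
        Module.End.one_apply]
    rw [h1, map_zero] at h2
    exact h2.symm
  obtain ⟨ζ, hζ⟩ := IsAlgClosed.exists_pow_nat_eq μ hmpos
  have hζ0 : ζ ≠ 0 := by
    intro h; rw [h, zero_pow hmpos.ne'] at hζ; exact hμ0 hζ.symm
  -- the scaled intertwiner T
  set zu : (V →ₗ[ℂ] V)ˣ :=
    ⟨ζ⁻¹ • (1 : V →ₗ[ℂ] V), ζ • (1 : V →ₗ[ℂ] V),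
      by ext v; simp [Module.End.mul_apply, smul_smul, inv_mul_cancel₀ hζ0, mul_inv_cancel₀ hζ0],
      by ext v; simp [Module.End.mul_apply, smul_smul, inv_mul_cancel₀ hζ0, mul_inv_cancel₀ hζ0]⟩ with hzu
  have hzcen : ∀ f : V →ₗ[ℂ] V, (zu : V →ₗ[ℂ] V) * f = f * (zu : V →ₗ[ℂ] V) := by
    intro f
    rw [hzu]
    simp [smul_mul_assoc, mul_smul_comm]
  set T : (V →ₗ[ℂ] V)ˣ := zu * Tu with hT
  have hcomm : Commute zu Tu := Units.ext (hzcen (Tu : V →ₗ[ℂ] V))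
  have hTm : T ^ m = σu c := by
    apply Units.ext
    rw [hT, hcomm.mul_pow, Units.val_mul]
    have h1 : ((zu ^ m : (V →ₗ[ℂ] V)ˣ) : V →ₗ[ℂ] V) = (ζ⁻¹) ^ m • 1 := by
      rw [Units.val_pow_eq_pow_val, hzu]
      simp [smul_pow]
    have h2 : ((Tu ^ m : (V →ₗ[ℂ] V)ˣ) : V →ₗ[ℂ] V) = μ • σ c := by
      have : Tu ^ m = σu c * Su := by rw [hSu]; group
      rw [this, Units.val_mul, hσuval]
      have : (Su : V →ₗ[ℂ] V) = μ • 1 := by ext v; simpa using hSscal v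
      rw [this]
      ext v; simp [Module.End.mul_apply]
    rw [h1, h2, hσuval]
    ext v
    simp [Module.End.mul_apply, smul_smul]
    rw [hζ, mul_inv_cancel₀ hμ0, one_smul]
  -- T^t = σ(g₀^t) whenever g₀^t ∈ N
  have hTz : ∀ (t : ℤ) (z : N), (z : G) = g₀ ^ t → T ^ t = σu z := by
    intro t z hz
    have ht : (g₀ : G) ^ t ∈ N := hz ▸ z.2
    obtain ⟨s, rfl⟩ := (hmem t).mp ht
    have hzc : z = c ^ s := by
      apply Subtype.ext
      rw [hz]
      push_cast [hc]
      rw [← zpow_mul]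
    rw [hzc, map_zpow σu c s, zpow_mul, zpow_natCast, hTm]
  -- intertwining for all integer powers of T
  have hT1 : ∀ (y z : N), (z : G) = g₀⁻¹ * ↑y * g₀ → T * σu z = σu y * T := by
    intro y z hz
    apply Units.ext
    rw [hT, Units.val_mul, Units.val_mul, hσuval, Units.val_mul, hσuval,
      mul_assoc, hTe y z hz, ← mul_assoc, hzcen, mul_assoc, ← Units.val_mul]
  have hconj : ∀ (j : ℤ) (y z : N), (z : G) = (g₀ ^ j)⁻¹ * ↑y * g₀ ^ j →
      T ^ j * σu z = σu y * T ^ j := by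
    intro j
    induction j using Int.induction_on with
    | zero =>
      intro y z hz
      have : z = y := Subtype.ext (by simpa using hz)
      subst this; simp
    | succ i ih =>
      intro y z hz
      have hwmem : ((g₀ : G) ^ (i : ℤ))⁻¹ * ↑y * g₀ ^ (i : ℤ) ∈ N := by
        simpa using hN.conj_mem _ y.2 ((g₀ : G) ^ (i : ℤ))⁻¹
      set w : N := ⟨_, hwmem⟩ with hw
      have hz' : (z : G) = g₀⁻¹ * ↑w * g₀ := by
        rw [hz, hw]
        show (g₀ ^ ((i : ℤ) + 1))⁻¹ * ↑y * g₀ ^ ((i : ℤ) + 1)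
          = g₀⁻¹ * ((g₀ ^ (i : ℤ))⁻¹ * ↑y * g₀ ^ (i : ℤ)) * g₀
        rw [zpow_add_one]
        group
      calc T ^ ((i : ℤ) + 1) * σu z = T ^ (i : ℤ) * (T * σu z) := by
            rw [zpow_add_one, mul_assoc]
        _ = T ^ (i : ℤ) * (σu w * T) := by rw [hT1 w z hz']
        _ = (σu y * T ^ (i : ℤ)) * T := by rw [← mul_assoc, ih y w rfl]
        _ = σu y * T ^ ((i : ℤ) + 1) := by rw [zpow_add_one, mul_assoc]
    | pred i ih =>
      intro y z hz
      have hwmem : g₀⁻¹ * (z : G) * g₀ ∈ N := by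
        simpa using hN.conj_mem _ z.2 (g₀ : G)⁻¹
      set w : N := ⟨_, hwmem⟩ with hw
      have h1 : T * σu w = σu z * T := hT1 z w rfl
      have hwy : (w : G) = (g₀ ^ (-(i : ℤ)))⁻¹ * ↑y * g₀ ^ (-(i : ℤ)) := by
        rw [hw]
        show g₀⁻¹ * (z : G) * g₀ = _
        rw [hz]
        have : (g₀ : G) ^ (-(i : ℤ)) = g₀ ^ (-(i : ℤ) - 1) * g₀ := by
          rw [← zpow_add_one]; ring_nf
        rw [this]
        group
      have h2 := ih y w hwy
      have hexp : T ^ (-(i : ℤ) - 1) * T = T ^ (-(i : ℤ)) := by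
        rw [← zpow_add_one]; ring_nf
      have hσz : σu z = T * σu w * T⁻¹ := by
        rw [h1]; group
      calc T ^ (-(i : ℤ) - 1) * σu z
          = T ^ (-(i : ℤ) - 1) * (T * σu w * T⁻¹) := by rw [hσz]
        _ = (T ^ (-(i : ℤ) - 1) * T) * σu w * T⁻¹ := by group
        _ = T ^ (-(i : ℤ)) * σu w * T⁻¹ := by rw [hexp]
        _ = σu y * T ^ (-(i : ℤ)) * T⁻¹ := by rw [h2]
        _ = σu y * (T ^ (-(i : ℤ)) * T⁻¹) := by rw [mul_assoc]
        _ = σu y * T ^ (-(i : ℤ) - 1) := by rw [← zpow_sub_one]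
  -- the extension
  set k : G → ℤ := fun g => (key g).choose with hk
  have hkspec : ∀ g : G, (g₀ ^ k g)⁻¹ * g ∈ N := fun g => (key g).choose_spec
  -- independence of the choice of exponent
  have hind : ∀ (g : G) (j : ℤ) (z : N), (z : G) = (g₀ ^ j)⁻¹ * g →
      T ^ j * σu z = T ^ (k g) * σu ⟨(g₀ ^ k g)⁻¹ * g, hkspec g⟩ := by
    intro g j z hz
    set w : N := ⟨(g₀ ^ k g)⁻¹ * g, hkspec g⟩ with hw
    have hzw : ((z * w⁻¹ : N) : G) = g₀ ^ (k g - j) := by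
      push_cast [hz, hw]
      rw [zpow_sub]
      group
    have h1 : T ^ (k g - j) = σu (z * w⁻¹) := hTz (k g - j) (z * w⁻¹) hzw
    have : T ^ j * σu z = T ^ j * (T ^ (k g - j) * σu w) := by
      rw [h1, map_mul, map_inv, inv_mul_cancel_right]
    rw [this, ← mul_assoc, ← zpow_add]
    ring_nf
  have hmul : ∀ a b : G,
      T ^ (k (a * b)) * σu ⟨(g₀ ^ k (a * b))⁻¹ * (a * b), hkspec (a * b)⟩
      = (T ^ (k a) * σu ⟨(g₀ ^ k a)⁻¹ * a, hkspec a⟩)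
        * (T ^ (k b) * σu ⟨(g₀ ^ k b)⁻¹ * b, hkspec b⟩) := by
    intro a b
    set wa : N := ⟨(g₀ ^ k a)⁻¹ * a, hkspec a⟩ with hwa
    set wb : N := ⟨(g₀ ^ k b)⁻¹ * b, hkspec b⟩ with hwb
    have humem : ((g₀ : G) ^ k b)⁻¹ * ↑wa * g₀ ^ k b ∈ N := by
      simpa using hN.conj_mem _ wa.2 ((g₀ : G) ^ k b)⁻¹
    set u : N := ⟨_, humem⟩ with hu
    have hz : ((u * wb : N) : G) = (g₀ ^ (k a + k b))⁻¹ * (a * b) := by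
      push_cast [hu, hwa, hwb]
      rw [zpow_add]
      group
    have h1 := (hind (a * b) (k a + k b) (u * wb) hz).symm
    rw [h1, map_mul, ← mul_assoc, zpow_add, mul_assoc (T ^ k a), hconj (k b) wa u rfl]
    group
  refine ⟨(Units.coeHom (V →ₗ[ℂ] V)).comp (MonoidHom.mk'
    (fun g => T ^ (k g) * σu ⟨(g₀ ^ k g)⁻¹ * g, hkspec g⟩) hmul), ?_⟩
  intro n
  have h0 : ((n : N) : G) = ((g₀ : G) ^ (0 : ℤ))⁻¹ * (n : G) := by simp
  have := hind (n : G) 0 ⟨(n : G), by simp⟩ (by simp)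
  have h2 : T ^ (k (n : G)) * σu ⟨(g₀ ^ k (n : G))⁻¹ * (n : G), hkspec (n : G)⟩ = σu n := by
    rw [← this, zpow_zero, one_mul]
  simp only [MonoidHom.comp_apply, MonoidHom.mk'_apply, Units.coeHom_apply]
  rw [h2, hσuval]
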